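/- Let W ∈ C²((0,∞)) satisfy |W^{(i)}(t)| ≤ C·t^{−α−i} for all t ≥ R and i ∈ {0,1,2}, for some C, R > 0 and α > 2. Then the function G : (0,∞)² → ℝ defined by G(a,b) := 2·J(a,b)/(a − b)² when a ≠ b, and G(a,a) := A(a), is continuous on (0,∞)². -/

import Mathlib

open Filter Set

/-- `J(a,b) = −(1/4) ∑_{j=2}^∞ (j−1) W(aj) − (1/4) ∑_{j=2}^∞ (j−1) W(bj)
  + (1/2) ∑_{i,j=1}^∞ W(bj + ai)`. -/
noncomputable def Jfun (W : ℝ → ℝ) (a b : ℝ) : ℝ :=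
  -(1 / 4) * ∑' j : ℕ, ((j : ℝ) + 1) * W (a * ((j : ℝ) + 2))
  - (1 / 4) * ∑' j : ℕ, ((j : ℝ) + 1) * W (b * ((j : ℝ) + 2))
  + (1 / 2) * ∑' p : ℕ × ℕ, W (b * ((p.1 : ℝ) + 1) + a * ((p.2 : ℝ) + 1))

/-- `A(a) = (1/12) ∑_{j=2}^∞ (j − j³) W''(aj)`. -/
noncomputable def Afun (W : ℝ → ℝ) (a : ℝ) : ℝ :=
  (1 / 12) * ∑' j : ℕ,
    (((j : ℝ) + 2) - ((j : ℝ) + 2) ^ 3) * deriv (deriv W) (a * ((j : ℝ) + 2))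

open MeasureTheory Topology

lemma aux_sum1 (k : ℕ) : ∑ i ∈ Finset.range k, ((i:ℝ)+1) = (k:ℝ)*((k:ℝ)+1)/2 := by
  induction k with
  | zero => simp
  | succ n ih => rw [Finset.sum_range_succ, ih]; push_cast; ring

lemma aux_sum2 (k : ℕ) : ∑ i ∈ Finset.range k, ((i:ℝ)+1)^2 = (k:ℝ)*((k:ℝ)+1)*(2*(k:ℝ)+1)/6 := by
  induction k with
  | zero => simp
  | succ n ih => rw [Finset.sum_range_succ, ih]; push_cast; ring

def antiE : (Σ n : ℕ, Fin (n+1)) ≃ ℕ × ℕ where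
  toFun x := (x.2.1, x.1 - x.2.1)
  invFun p := ⟨p.1 + p.2, ⟨p.1, by omega⟩⟩
  left_inv := by
    rintro ⟨n, ⟨i, hi⟩⟩
    have h : i + (n - i) = n := by omega
    exact Sigma.ext h (by rw [Fin.heq_ext_iff (show i + (n-i) + 1 = n + 1 by omega)])
  right_inv := by rintro ⟨a, b⟩; simp

lemma aux_tsum_fiber (g : ℕ × ℕ → ℝ) (hg : Summable g) :
    ∑' p, g p = ∑' n : ℕ, ∑ i ∈ Finset.range (n+1), g (i, n - i) := by
  rw [← antiE.tsum_eq g]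
  rw [Summable.tsum_sigma (f := fun c => g (antiE c)) (antiE.summable_iff.2 hg)]
  congr 1
  ext n
  rw [tsum_fintype]
  exact Fin.sum_univ_eq_sum_range (fun i => g (i, n - i)) (n+1)

lemma aux_summable_fiber (g : ℕ × ℕ → ℝ) (v : ℕ → ℝ)
    (hb : ∀ p : ℕ × ℕ, |g p| ≤ v (p.1 + p.2))
    (hsv : Summable (fun n : ℕ => ((n:ℝ)+1) * v n)) : Summable g := by
  have hv : ∀ n, 0 ≤ v n := fun n => le_trans (abs_nonneg _) (by simpa using hb (0, n))
  rw [← summable_abs_iff, ← antiE.summable_iff]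
  have h1 : Summable (fun c : Σ n : ℕ, Fin (n+1) => |g (antiE c)|) := by
    apply (summable_sigma_of_nonneg (fun c => abs_nonneg _)).2
    constructor
    · intro n; exact Summable.of_finite
    · apply Summable.of_nonneg_of_le (fun n => tsum_nonneg (fun i => abs_nonneg _))
        (fun n => ?_) hsv
      rw [tsum_fintype]
      calc ∑ i : Fin (n+1), |g (antiE ⟨n, i⟩)| ≤ ∑ _i : Fin (n+1), v n := by
            apply Finset.sum_le_sum
            intro i _
            have := hb (antiE ⟨n, i⟩)
            have harg : (antiE ⟨n, i⟩).1 + (antiE ⟨n, i⟩).2 = n := by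
              simp only [antiE, Equiv.coe_fn_mk]; omega
            rwa [harg] at this
        _ = ((n:ℝ)+1) * v n := by
            rw [Finset.sum_const, Finset.card_univ, Fintype.card_fin, nsmul_eq_mul]
            push_cast; ring
  exact h1

lemma aux_summable_rpow (q : ℝ) (hq : q < -1) (N : ℕ) :
    Summable (fun j : ℕ => ((j:ℝ) + N) ^ q) := by
  have h0 : Summable (fun n : ℕ => (n:ℝ) ^ q) := Real.summable_nat_rpow.2 hq
  have := (summable_nat_add_iff (f := fun n : ℕ => (n:ℝ) ^ q) N).2 h0
  apply this.congr
  intro j; push_cast; ring_nf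

lemma aux_summable_cut (k : ℕ) (ε R C M β : ℝ) (hε : 0 < ε) (hβ : (k:ℝ) + 1 < β) :
    Summable (fun j : ℕ => ((j:ℝ)+2)^k *
      (if ε*((j:ℝ)+2) < R then M else C * (ε*((j:ℝ)+2)) ^ (-β))) := by
  set N := ⌈R / ε⌉₊ with hN
  apply (summable_nat_add_iff N).1
  have key : ∀ j : ℕ, ¬ (ε * (((j+N:ℕ):ℝ)+2) < R) := by
    intro j
    push_cast
    rw [not_lt]
    have h1 : R / ε ≤ (N:ℝ) := Nat.le_ceil _
    have h2 : R ≤ ε * N := by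
      rw [div_le_iff₀ hε] at h1; linarith [h1]
    nlinarith [(Nat.cast_nonneg j : (0:ℝ) ≤ (j:ℝ)), hε.le]
  have hsum := (aux_summable_rpow ((k:ℝ) - β) (by linarith) (N+2)).mul_left (C * ε ^ (-β))
  apply hsum.congr
  intro j
  rw [if_neg (key j)]
  have hc2 : ((N+2:ℕ):ℝ) = (N:ℝ)+2 := by push_cast; ring
  have hx : (0:ℝ) < (j:ℝ) + ((N+2:ℕ):ℝ) := by rw [hc2]; positivity
  have hc1 : ((j+N:ℕ):ℝ) + 2 = (j:ℝ) + ((N+2:ℕ):ℝ) := by push_cast; ring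
  rw [hc1, Real.mul_rpow hε.le hx.le,
    ← Real.rpow_natCast ((j:ℝ) + ((N+2:ℕ):ℝ)) k,
    show (k:ℝ) - β = (k:ℝ) + (-β) by ring, Real.rpow_add hx]
  ring

lemma aux_bound_tail (f : ℝ → ℝ) (hf : ContinuousOn f (Ioi 0)) (δ C R β : ℝ)
    (hδ : 0 < δ) (hR : 0 < R) (hC : 0 ≤ C) (hβ : 0 ≤ β)
    (htail : ∀ t, R ≤ t → |f t| ≤ C * t ^ (-β)) :
    ∃ M : ℝ, 0 ≤ M ∧ ∀ t, δ ≤ t → |f t| ≤ M := by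
  obtain ⟨M₀, hM₀⟩ := (isCompact_Icc (a := δ) (b := R)).exists_bound_of_continuousOn
    (hf.mono (fun t ht => lt_of_lt_of_le hδ ht.1))
  refine ⟨max M₀ (C * R ^ (-β)), le_trans (by positivity) (le_max_right _ _), ?_⟩
  intro t ht
  rcases le_or_gt t R with h | h
  · exact le_trans (hM₀ t ⟨ht, h⟩) (le_max_left _ _)
  · refine le_trans (htail t h.le) (le_trans ?_ (le_max_right _ _))
    exact mul_le_mul_of_nonneg_left
      (Real.rpow_le_rpow_of_nonpos hR h.le (by linarith)) hC

lemma aux_bound_cut (f : ℝ → ℝ) (C R β M ε : ℝ) (hε : 0 < ε) (hC : 0 ≤ C) (hβ : 0 ≤ β)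
    (htail : ∀ t, R ≤ t → |f t| ≤ C * t ^ (-β))
    (hM : ∀ t, 2*ε ≤ t → |f t| ≤ M) (j : ℕ) :
    ∀ t, ε*((j:ℝ)+2) ≤ t →
      |f t| ≤ (if ε*((j:ℝ)+2) < R then M else C * (ε*((j:ℝ)+2)) ^ (-β)) := by
  intro t ht
  have h2 : 2*ε ≤ ε*((j:ℝ)+2) := by nlinarith [(Nat.cast_nonneg j : (0:ℝ) ≤ (j:ℝ))]
  split_ifs with h
  · exact hM t (le_trans h2 ht)
  · push_neg at h
    refine le_trans (htail t (le_trans h ht)) ?_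
    apply mul_le_mul_of_nonneg_left _ hC
    exact Real.rpow_le_rpow_of_nonpos (by positivity) ht (by linarith)

noncomputable def psiI (D : ℝ → ℝ) (δ p y : ℝ) : ℝ :=
  ∫ u in Icc (0:ℝ) 1, (1 - u) * D (max (p + u * y) δ)

lemma psiI_cont (D : ℝ → ℝ) (δ : ℝ) (hD : ContinuousOn D (Ioi 0)) (hδ : 0 < δ) :
    Continuous (fun q : ℝ × ℝ => psiI D δ q.1 q.2) := by
  have hK : Continuous fun t : ℝ => D (max t δ) := by
    apply hD.comp_continuous (continuous_id.max continuous_const)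
    intro t
    exact lt_of_lt_of_le hδ (le_max_right _ _)
  exact continuous_parametric_integral_of_continuous
    (f := fun (q : ℝ × ℝ) (u : ℝ) => (1 - u) * D (max (q.1 + u * q.2) δ))
    (by
      apply Continuous.mul
      · exact (continuous_const.sub continuous_snd)
      · exact (hK.comp (continuous_fst.fst.add (continuous_snd.mul continuous_fst.snd))))
    isCompact_Icc

lemma psiI_bound (D : ℝ → ℝ) (hD : ContinuousOn D (Ioi 0)) (δ s p y B : ℝ)
    (hδ : 0 < δ) (hδs : δ ≤ s) (hp : s ≤ p) (hpy : s ≤ p + y)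
    (hB : ∀ t, s ≤ t → |D t| ≤ B) : |psiI D δ p y| ≤ B := by
  have hseg : ∀ u ∈ Icc (0:ℝ) 1, s ≤ p + u * y := by
    rintro u ⟨hu0, hu1⟩
    rcases le_or_gt 0 y with hy | hy
    · nlinarith
    · nlinarith
  have hK : Continuous fun t : ℝ => D (max t δ) := by
    apply hD.comp_continuous (continuous_id.max continuous_const)
    intro t; exact lt_of_lt_of_le hδ (le_max_right _ _)
  have hB0 : 0 ≤ B := le_trans (abs_nonneg _) (hB p hp)
  have := norm_setIntegral_le_of_norm_le_const (μ := volume)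
    (f := fun u : ℝ => (1 - u) * D (max (p + u * y) δ))
    (s := Icc (0:ℝ) 1) (C := B)
    (by simp [Real.volume_Icc])
    (by
      rintro u ⟨hu0, hu1⟩
      have h1 : max (p + u * y) δ = p + u * y := max_eq_left (le_trans hδs (hseg u ⟨hu0, hu1⟩))
      rw [Real.norm_eq_abs, abs_mul, h1]
      calc |1 - u| * |D (p + u * y)| ≤ 1 * B := by
            apply mul_le_mul (by rw [abs_le]; constructor <;> linarith)
              (hB _ (hseg u ⟨hu0, hu1⟩)) (abs_nonneg _) zero_le_one
        _ = B := one_mul B)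
  rw [Real.norm_eq_abs] at this
  calc |psiI D δ p y| ≤ B * volume.real (Icc (0:ℝ) 1) := this
    _ = B := by simp [Real.volume_Icc]

lemma psiI_zero (D : ℝ → ℝ) (δ p : ℝ) : psiI D δ p 0 = D (max p δ) / 2 := by
  unfold psiI
  have h1 : ∀ u : ℝ, (1 - u) * D (max (p + u * 0) δ) = D (max p δ) * (1 - u) := by
    intro u; rw [mul_comm]; norm_num
  rw [show (fun u : ℝ => (1 - u) * D (max (p + u * 0) δ)) = fun u : ℝ => D (max p δ) * (1 - u)
      from funext h1]
  rw [integral_Icc_eq_integral_Ioc, ← intervalIntegral.integral_of_le (zero_le_one)]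
  rw [intervalIntegral.integral_const_mul]
  rw [intervalIntegral.integral_sub intervalIntegrable_const intervalIntegral.intervalIntegrable_id]
  simp
  ring

lemma aux_taylor2 (W : ℝ → ℝ) (hW : ContDiffOn ℝ 2 W (Ioi 0)) (δ p y : ℝ)
    (hδ : 0 < δ) (hp : δ ≤ p) (hpy : δ ≤ p + y) :
    W (p + y) = W p + y * deriv W p + y^2 * psiI (deriv (deriv W)) δ p y := by
  set D := deriv (deriv W) with hD
  have hW1 : ∀ z : ℝ, 0 < z → HasDerivAt W (deriv W z) z := by
    intro z hz
    exact ((hW.contDiffAt (Ioi_mem_nhds hz)).differentiableAt (by norm_num)).hasDerivAt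
  have hWd : ContDiffOn ℝ 1 (deriv W) (Ioi 0) :=
    hW.deriv_of_isOpen isOpen_Ioi (by norm_num)
  have hW2 : ∀ z : ℝ, 0 < z → HasDerivAt (deriv W) (D z) z := by
    intro z hz
    exact ((hWd.contDiffAt (Ioi_mem_nhds hz)).differentiableAt (by norm_num)).hasDerivAt
  have hDc : ContinuousOn D (Ioi 0) :=
    hWd.continuousOn_deriv_of_isOpen isOpen_Ioi (by norm_num)
  have hseg : ∀ u ∈ Icc (0:ℝ) 1, δ ≤ p + u * y := by
    rintro u ⟨hu0, hu1⟩
    rcases le_or_gt 0 y with hy | hy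
    · nlinarith
    · nlinarith
  have hsegpos : ∀ u ∈ Icc (0:ℝ) 1, (0:ℝ) < p + u * y :=
    fun u hu => lt_of_lt_of_le hδ (hseg u hu)
  set H : ℝ → ℝ := fun u => W (p + u * y) + (1 - u) * y * deriv W (p + u * y) with hH
  have hHd : ∀ u ∈ uIcc (0:ℝ) 1, HasDerivAt H ((1 - u) * y^2 * D (p + u * y)) u := by
    intro u hu
    rw [uIcc_of_le zero_le_one] at hu
    have hz : (0:ℝ) < p + u * y := hsegpos u hu
    have h1 : HasDerivAt (fun u : ℝ => p + u * y) y u := by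
      simpa using ((hasDerivAt_id u).mul_const y).const_add p
    have hA : HasDerivAt (fun u : ℝ => W (p + u * y)) (deriv W (p + u * y) * y) u :=
      (hW1 _ hz).comp u h1
    have hB : HasDerivAt (fun u : ℝ => deriv W (p + u * y)) (D (p + u * y) * y) u :=
      HasDerivAt.comp (h₂ := deriv W) u (hW2 _ hz) h1
    have hC : HasDerivAt (fun u : ℝ => (1 - u) * y) (-y) u := by
      simpa using ((hasDerivAt_id u).const_sub 1).mul_const y
    have := hA.add (hC.mul hB)
    exact this.congr_deriv (by ring)
  have hint : IntervalIntegrable (fun u => (1 - u) * y^2 * D (p + u * y)) volume 0 1 := by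
    apply ContinuousOn.intervalIntegrable
    rw [uIcc_of_le zero_le_one]
    apply ContinuousOn.mul
    · exact (continuous_const.sub continuous_id).continuousOn.mul continuousOn_const
    · exact hDc.comp ((continuous_const.add (continuous_id.mul continuous_const)).continuousOn)
        (fun u hu => hsegpos u hu)
  have hFTC := intervalIntegral.integral_eq_sub_of_hasDerivAt hHd hint
  have hH1 : H 1 = W (p + y) := by simp [hH]
  have hH0 : H 0 = W p + y * deriv W p := by simp [hH]
  rw [hH1, hH0] at hFTC
  have hpsi : y^2 * psiI D δ p y = ∫ u in (0:ℝ)..1, (1 - u) * y^2 * D (p + u * y) := by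
    unfold psiI
    have hcg : ∀ u ∈ Icc (0:ℝ) 1, (1 - u) * D (max (p + u * y) δ) = (1 - u) * D (p + u * y) := by
      intro u hu; rw [max_eq_left (hseg u hu)]
    rw [setIntegral_congr_fun measurableSet_Icc hcg]
    rw [integral_Icc_eq_integral_Ioc, ← intervalIntegral.integral_of_le zero_le_one]
    rw [← intervalIntegral.integral_const_mul]
    apply intervalIntegral.integral_congr
    intro u _
    ring
  rw [hpsi, hFTC]
  ring

set_option maxHeartbeats 2000000 in
/-- the function `G(a,b) := 2J(a,b)/(a−b)²` for `a ≠ b`,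
`G(a,a) := A(a)`, is continuous on `(0,∞)²`. -/
theorem stmt13 (W : ℝ → ℝ) (hW : ContDiffOn ℝ 2 W (Set.Ioi 0))
    (C R α : ℝ) (hC : 0 < C) (hR : 0 < R) (hα : 2 < α)
    (hW0 : ∀ t : ℝ, R ≤ t → |W t| ≤ C * t ^ (-α))
    (hW1 : ∀ t : ℝ, R ≤ t → |deriv W t| ≤ C * t ^ (-α - 1))
    (hW2 : ∀ t : ℝ, R ≤ t → |deriv (deriv W) t| ≤ C * t ^ (-α - 2)) :
    ContinuousOn
      (fun x : ℝ × ℝ =>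
        if x.1 = x.2 then Afun W x.1 else 2 * Jfun W x.1 x.2 / (x.1 - x.2) ^ 2)
      (Set.Ioi 0 ×ˢ Set.Ioi 0) := by
  set D := deriv (deriv W) with hDdef
  have hWd : ContDiffOn ℝ 1 (deriv W) (Ioi 0) := hW.deriv_of_isOpen isOpen_Ioi (by norm_num)
  have hDc : ContinuousOn D (Ioi 0) := hWd.continuousOn_deriv_of_isOpen isOpen_Ioi (by norm_num)
  have hWc : ContinuousOn W (Ioi 0) := hW.continuousOn
  have hα0 : (0:ℝ) ≤ α := by linarith
  have hD2 : ∀ t : ℝ, R ≤ t → |D t| ≤ C * t ^ (-(α+2)) := by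
    intro t ht; rw [show -(α+2) = -α-2 by ring]; exact hW2 t ht
  apply continuousOn_of_forall_continuousAt
  rintro ⟨a₀, b₀⟩ hx
  obtain ⟨ha₀, hb₀⟩ := Set.mem_prod.mp hx
  simp only [Set.mem_Ioi] at ha₀ hb₀
  set ε := min a₀ b₀ / 2 with hεdef
  have hε : 0 < ε := half_pos (lt_min ha₀ hb₀)
  obtain ⟨MW, hMW0, hMW⟩ := aux_bound_tail W hWc (2*ε) C R α (by positivity) hR hC.le hα0 hW0
  obtain ⟨MD, hMD0, hMD⟩ :=
    aux_bound_tail D hDc (2*ε) C R (α+2) (by positivity) hR hC.le (by linarith) hD2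
  set vW : ℕ → ℝ := fun j => if ε*((j:ℝ)+2) < R then MW else C * (ε*((j:ℝ)+2)) ^ (-α) with hvWdef
  have hvW : ∀ (j:ℕ), ∀ t, ε*((j:ℝ)+2) ≤ t → |W t| ≤ vW j :=
    fun j => aux_bound_cut W C R α MW ε hε hC.le hα0 hW0 hMW j
  set BD : ℕ → ℝ := fun j => if ε*((j:ℝ)+2) < R then MD else C * (ε*((j:ℝ)+2)) ^ (-(α+2))
    with hBDdef
  have hBD : ∀ (j:ℕ), ∀ t, ε*((j:ℝ)+2) ≤ t → |D t| ≤ BD j :=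
    fun j => aux_bound_cut D C R (α+2) MD ε hε hC.le (by linarith) hD2 hMD j
  have hBD0 : ∀ j, 0 ≤ BD j := by
    intro j
    exact le_trans (abs_nonneg _) (hBD j (ε*((j:ℝ)+2)) le_rfl)
  set φ : ℕ → ℝ × ℝ → ℝ := fun j q => ∑ i ∈ Finset.range (j+1),
      (((j:ℝ)-(i:ℝ)+1)^2 * psiI D ε (q.2*((j:ℝ)+2)) ((q.1-q.2)*((j:ℝ)-(i:ℝ)+1))
        - (((j:ℝ)+2)^2/2) * psiI D ε (q.2*((j:ℝ)+2)) ((q.1-q.2)*((j:ℝ)+2))) with hφdef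
  set Φ : ℝ × ℝ → ℝ := fun q => ∑' j, φ j q with hΦdef
  set V : Set (ℝ×ℝ) := Ioi ε ×ˢ Ioi ε with hVdef
  have hV : V ∈ 𝓝 (a₀, b₀) := by
    apply (isOpen_Ioi.prod isOpen_Ioi).mem_nhds
    constructor
    · simp only [Set.mem_Ioi]
      have := min_le_left a₀ b₀; simp only [hεdef]; linarith
    · simp only [Set.mem_Ioi]
      have := min_le_right a₀ b₀; simp only [hεdef]; linarith
  have hgeo : ∀ q ∈ V, ∀ (j : ℕ), ∀ m : ℝ, 1 ≤ m → m ≤ (j:ℝ)+2 →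
      ε*((j:ℝ)+2) ≤ q.2*((j:ℝ)+2) ∧ ε*((j:ℝ)+2) ≤ q.2*((j:ℝ)+2) + (q.1-q.2)*m := by
    rintro ⟨a, b⟩ ⟨(haV : a ∈ Ioi ε), (hbV : b ∈ Ioi ε)⟩ j m hm1 hm2
    simp only [Set.mem_Ioi] at haV hbV
    have hj : (0:ℝ) ≤ (j:ℝ) := Nat.cast_nonneg j
    constructor
    · nlinarith
    · have key : b*((j:ℝ)+2) + (a-b)*m = b*(((j:ℝ)+2) - m) + a*m := by ring
      rw [key]
      nlinarith
  have hφb : ∀ (j:ℕ), ∀ q ∈ V, ‖φ j q‖ ≤ ((j:ℝ)+2)^3 * ((3/2) * BD j) := by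
    intro j q hq
    have hj : (0:ℝ) ≤ (j:ℝ) := Nat.cast_nonneg j
    have hδs : ε ≤ ε*((j:ℝ)+2) := by nlinarith
    have hb1 : ∀ m : ℝ, 1 ≤ m → m ≤ (j:ℝ)+2 →
        |psiI D ε (q.2*((j:ℝ)+2)) ((q.1-q.2)*m)| ≤ BD j := by
      intro m hm1 hm2
      obtain ⟨h1, h2⟩ := hgeo q hq j m hm1 hm2
      exact psiI_bound D hDc ε (ε*((j:ℝ)+2)) _ _ (BD j) hε hδs h1 h2 (hBD j)
    rw [Real.norm_eq_abs]
    calc |φ j q| ≤ ∑ i ∈ Finset.range (j+1),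
          |((j:ℝ)-(i:ℝ)+1)^2 * psiI D ε (q.2*((j:ℝ)+2)) ((q.1-q.2)*((j:ℝ)-(i:ℝ)+1))
            - (((j:ℝ)+2)^2/2) * psiI D ε (q.2*((j:ℝ)+2)) ((q.1-q.2)*((j:ℝ)+2))| :=
        Finset.abs_sum_le_sum_abs _ _
      _ ≤ ∑ _i ∈ Finset.range (j+1), (3/2)*((j:ℝ)+2)^2*BD j := by
          apply Finset.sum_le_sum
          intro i hi
          have hi' : (i:ℝ) ≤ (j:ℝ) := by
            exact_mod_cast Nat.lt_succ_iff.mp (Finset.mem_range.mp hi)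
          have hi0 : (0:ℝ) ≤ (i:ℝ) := Nat.cast_nonneg i
          have hm1 : 1 ≤ (j:ℝ)-(i:ℝ)+1 := by linarith
          have hm2 : (j:ℝ)-(i:ℝ)+1 ≤ (j:ℝ)+2 := by linarith
          have e1 := hb1 _ hm1 hm2
          have e2 := hb1 ((j:ℝ)+2) (by linarith) le_rfl
          calc |((j:ℝ)-(i:ℝ)+1)^2 * psiI D ε (q.2*((j:ℝ)+2)) ((q.1-q.2)*((j:ℝ)-(i:ℝ)+1))
                - (((j:ℝ)+2)^2/2) * psiI D ε (q.2*((j:ℝ)+2)) ((q.1-q.2)*((j:ℝ)+2))|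
              ≤ |((j:ℝ)-(i:ℝ)+1)^2 * psiI D ε (q.2*((j:ℝ)+2)) ((q.1-q.2)*((j:ℝ)-(i:ℝ)+1))|
                + |(((j:ℝ)+2)^2/2) * psiI D ε (q.2*((j:ℝ)+2)) ((q.1-q.2)*((j:ℝ)+2))| :=
              abs_sub _ _
            _ = ((j:ℝ)-(i:ℝ)+1)^2 * |psiI D ε (q.2*((j:ℝ)+2)) ((q.1-q.2)*((j:ℝ)-(i:ℝ)+1))|
                + (((j:ℝ)+2)^2/2) * |psiI D ε (q.2*((j:ℝ)+2)) ((q.1-q.2)*((j:ℝ)+2))| := by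
                rw [abs_mul, abs_mul, abs_of_nonneg (by positivity : (0:ℝ) ≤ ((j:ℝ)-(i:ℝ)+1)^2),
                  abs_of_nonneg (by positivity : (0:ℝ) ≤ ((j:ℝ)+2)^2/2)]
            _ ≤ (3/2)*((j:ℝ)+2)^2*BD j := by
                have hmsq : ((j:ℝ)-(i:ℝ)+1)^2 ≤ ((j:ℝ)+2)^2 := by nlinarith
                have t1 : ((j:ℝ)-(i:ℝ)+1)^2
                    * |psiI D ε (q.2*((j:ℝ)+2)) ((q.1-q.2)*((j:ℝ)-(i:ℝ)+1))|
                    ≤ ((j:ℝ)+2)^2 * BD j :=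
                  mul_le_mul hmsq e1 (abs_nonneg _) (by positivity)
                have t2 : (((j:ℝ)+2)^2/2) * |psiI D ε (q.2*((j:ℝ)+2)) ((q.1-q.2)*((j:ℝ)+2))|
                    ≤ (((j:ℝ)+2)^2/2) * BD j :=
                  mul_le_mul_of_nonneg_left e2 (by positivity)
                linarith
      _ = ((j:ℝ)+1)*((3/2)*((j:ℝ)+2)^2*BD j) := by
          rw [Finset.sum_const, Finset.card_range, nsmul_eq_mul]; push_cast; ring
      _ ≤ ((j:ℝ)+2)^3 * ((3/2) * BD j) := by nlinarith [hBD0 j]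
  have hu : Summable (fun j : ℕ => ((j:ℝ)+2)^3 * ((3/2) * BD j)) := by
    have h := aux_summable_cut 3 ε R ((3/2)*C) ((3/2)*MD) (α+2) hε (by push_cast; linarith)
    apply h.congr
    intro j
    simp only [hBDdef]
    split_ifs with h' <;> ring
  have hφc : ∀ j, ContinuousOn (φ j) V := by
    intro j
    apply Continuous.continuousOn
    apply continuous_finset_sum
    intro i _
    have hψ : Continuous (fun q : ℝ×ℝ => psiI D ε q.1 q.2) := psiI_cont D ε hDc hε
    apply Continuous.sub
    · exact Continuous.mul continuous_const
        (hψ.comp ((continuous_snd.mul continuous_const).prodMk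
          ((continuous_fst.sub continuous_snd).mul continuous_const)))
    · exact Continuous.mul continuous_const
        (hψ.comp ((continuous_snd.mul continuous_const).prodMk
          ((continuous_fst.sub continuous_snd).mul continuous_const)))
  have hΦc : ContinuousOn Φ V := continuousOn_tsum hφc hu (fun j q hq => hφb j q hq)
  have hvW0 : ∀ j, 0 ≤ vW j := by
    intro j
    exact le_trans (abs_nonneg _) (hvW j (ε*((j:ℝ)+2)) le_rfl)
  have hs1 : ∀ j : ℕ, ∑ i ∈ Finset.range (j+1), ((j:ℝ)-(i:ℝ)+1) = ((j:ℝ)+1)*((j:ℝ)+2)/2 := by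
    intro j
    calc ∑ i ∈ Finset.range (j+1), ((j:ℝ)-(i:ℝ)+1)
        = ∑ i ∈ Finset.range (j+1), (((j-i:ℕ):ℝ)+1) := by
          refine Finset.sum_congr rfl (fun i hi => ?_)
          rw [Nat.cast_sub (Nat.lt_succ_iff.mp (Finset.mem_range.mp hi))]
      _ = ∑ i ∈ Finset.range (j+1), ((i:ℝ)+1) := by
          simpa using Finset.sum_range_reflect (fun i : ℕ => ((i:ℝ)+1)) (j+1)
      _ = ((j:ℝ)+1)*((j:ℝ)+2)/2 := by rw [aux_sum1 (j+1)]; push_cast; ring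
  have hs2 : ∀ j : ℕ, ∑ i ∈ Finset.range (j+1), ((j:ℝ)-(i:ℝ)+1)^2
      = ((j:ℝ)+1)*((j:ℝ)+2)*(2*(j:ℝ)+3)/6 := by
    intro j
    calc ∑ i ∈ Finset.range (j+1), ((j:ℝ)-(i:ℝ)+1)^2
        = ∑ i ∈ Finset.range (j+1), (((j-i:ℕ):ℝ)+1)^2 := by
          refine Finset.sum_congr rfl (fun i hi => ?_)
          rw [Nat.cast_sub (Nat.lt_succ_iff.mp (Finset.mem_range.mp hi))]
      _ = ∑ i ∈ Finset.range (j+1), ((i:ℝ)+1)^2 := by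
          simpa using Finset.sum_range_reflect (fun i : ℕ => ((i:ℝ)+1)^2) (j+1)
      _ = ((j:ℝ)+1)*((j:ℝ)+2)*(2*(j:ℝ)+3)/6 := by rw [aux_sum2 (j+1)]; push_cast; ring
  have hGΦ : ∀ q ∈ V,
      (if (q:ℝ×ℝ).1 = q.2 then Afun W q.1 else 2 * Jfun W q.1 q.2 / (q.1 - q.2)^2) = Φ q := by
    rintro ⟨a, b⟩ hqV
    have haV : ε < a := hqV.1
    have hbV : ε < b := hqV.2
    by_cases hab : a = b
    · subst hab
      rw [if_pos rfl]
      have hφd : ∀ j : ℕ, φ j (a, a)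
          = (1/12) * (((((j:ℝ)+2) - ((j:ℝ)+2)^3)) * D (a*((j:ℝ)+2))) := by
        intro j
        have hj : (0:ℝ) ≤ (j:ℝ) := Nat.cast_nonneg j
        have hmax : max (a*((j:ℝ)+2)) ε = a*((j:ℝ)+2) := max_eq_left (by nlinarith)
        have hz : ∀ m : ℝ, psiI D ε (a*((j:ℝ)+2)) ((a-a)*m) = D (a*((j:ℝ)+2))/2 := by
          intro m; rw [show (a-a)*m = 0 by ring, psiI_zero, hmax]
        simp only [hφdef]
        rw [Finset.sum_congr rfl (fun i _ => by rw [hz ((j:ℝ)-(i:ℝ)+1), hz ((j:ℝ)+2)] : ∀ i ∈ Finset.range (j+1),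
          (((j:ℝ)-(i:ℝ)+1)^2 * psiI D ε ((a,a).2*((j:ℝ)+2)) (((a,a).1-(a,a).2)*((j:ℝ)-(i:ℝ)+1))
            - (((j:ℝ)+2)^2/2) * psiI D ε ((a,a).2*((j:ℝ)+2)) (((a,a).1-(a,a).2)*((j:ℝ)+2)))
          = (((j:ℝ)-(i:ℝ)+1)^2 * (D (a*((j:ℝ)+2))/2) - (((j:ℝ)+2)^2/2) * (D (a*((j:ℝ)+2))/2)))]
        rw [Finset.sum_sub_distrib, ← Finset.sum_mul, hs2 j, Finset.sum_const,
          Finset.card_range, nsmul_eq_mul]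
        push_cast; ring
      have hΦa : Φ (a, a) = (1/12) * ∑' j : ℕ,
          ((((j:ℝ)+2) - ((j:ℝ)+2)^3) * D (a*((j:ℝ)+2))) := by
        simp only [hΦdef]
        rw [tsum_congr hφd]
        exact tsum_mul_left
      rw [hΦa]
      rfl
    · rw [if_neg hab]
      show 2 * Jfun W a b / (a - b)^2 = Φ (a, b)
      have hhne : (a - b) ≠ 0 := sub_ne_zero.2 hab
      have hεa : ε ≤ a := haV.le
      have hεb : ε ≤ b := hbV.le
      have hsv : Summable (fun n : ℕ => ((n:ℝ)+1) * vW n) := by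
        have h := aux_summable_cut 1 ε R C MW α hε (by push_cast; linarith)
        apply Summable.of_nonneg_of_le
          (fun n => mul_nonneg (by positivity) (hvW0 n)) (fun n => ?_) h
        rw [pow_one]
        exact mul_le_mul_of_nonneg_right (by linarith) (hvW0 n)
      have SWab : Summable (fun p : ℕ×ℕ => W (b*((p.1:ℝ)+1)+a*((p.2:ℝ)+1))) := by
        apply aux_summable_fiber _ vW _ hsv
        intro p
        apply hvW (p.1+p.2)
        push_cast
        nlinarith [(Nat.cast_nonneg p.1 : (0:ℝ) ≤ (p.1:ℝ)), (Nat.cast_nonneg p.2 : (0:ℝ) ≤ (p.2:ℝ))]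
      have SWa : Summable (fun p : ℕ×ℕ => W (a*((p.1:ℝ)+(p.2:ℝ)+2))) := by
        apply aux_summable_fiber _ vW _ hsv
        intro p
        apply hvW (p.1+p.2)
        push_cast
        nlinarith [(Nat.cast_nonneg p.1 : (0:ℝ) ≤ (p.1:ℝ)), (Nat.cast_nonneg p.2 : (0:ℝ) ≤ (p.2:ℝ))]
      have SWb : Summable (fun p : ℕ×ℕ => W (b*((p.1:ℝ)+(p.2:ℝ)+2))) := by
        apply aux_summable_fiber _ vW _ hsv
        intro p
        apply hvW (p.1+p.2)
        push_cast
        nlinarith [(Nat.cast_nonneg p.1 : (0:ℝ) ≤ (p.1:ℝ)), (Nat.cast_nonneg p.2 : (0:ℝ) ≤ (p.2:ℝ))]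
      set F : ℕ×ℕ → ℝ := fun p => W (b*((p.1:ℝ)+1)+a*((p.2:ℝ)+1))
        - (1/2) * W (a*((p.1:ℝ)+(p.2:ℝ)+2)) - (1/2) * W (b*((p.1:ℝ)+(p.2:ℝ)+2)) with hFdef
      have SF : Summable F := (SWab.sub (SWa.mul_left (1/2))).sub (SWb.mul_left (1/2))
      have hTa : ∑' p : ℕ×ℕ, W (a*((p.1:ℝ)+(p.2:ℝ)+2))
          = ∑' j : ℕ, ((j:ℝ)+1) * W (a*((j:ℝ)+2)) := by
        rw [aux_tsum_fiber _ SWa]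
        refine tsum_congr (fun j => ?_)
        have hc : ∀ i ∈ Finset.range (j+1),
            W (a*((i:ℝ)+(((j-i:ℕ)):ℝ)+2)) = W (a*((j:ℝ)+2)) := by
          intro i hi
          rw [Nat.cast_sub (Nat.lt_succ_iff.mp (Finset.mem_range.mp hi))]
          ring_nf
        rw [Finset.sum_congr rfl hc, Finset.sum_const, Finset.card_range, nsmul_eq_mul]
        push_cast; ring
      have hTb : ∑' p : ℕ×ℕ, W (b*((p.1:ℝ)+(p.2:ℝ)+2))
          = ∑' j : ℕ, ((j:ℝ)+1) * W (b*((j:ℝ)+2)) := by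
        rw [aux_tsum_fiber _ SWb]
        refine tsum_congr (fun j => ?_)
        have hc : ∀ i ∈ Finset.range (j+1),
            W (b*((i:ℝ)+(((j-i:ℕ)):ℝ)+2)) = W (b*((j:ℝ)+2)) := by
          intro i hi
          rw [Nat.cast_sub (Nat.lt_succ_iff.mp (Finset.mem_range.mp hi))]
          ring_nf
        rw [Finset.sum_congr rfl hc, Finset.sum_const, Finset.card_range, nsmul_eq_mul]
        push_cast; ring
      have h2J : 2 * Jfun W a b = ∑' p, F p := by
        have e1 : ∑' p, F p = (∑' p : ℕ×ℕ, W (b*((p.1:ℝ)+1)+a*((p.2:ℝ)+1)))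
            - (1/2) * (∑' p : ℕ×ℕ, W (a*((p.1:ℝ)+(p.2:ℝ)+2)))
            - (1/2) * (∑' p : ℕ×ℕ, W (b*((p.1:ℝ)+(p.2:ℝ)+2))) := by
          simp only [hFdef]
          rw [Summable.tsum_sub (SWab.sub (SWa.mul_left (1/2))) (SWb.mul_left (1/2)),
            Summable.tsum_sub SWab (SWa.mul_left (1/2)), tsum_mul_left, tsum_mul_left]
        rw [e1, hTa, hTb]
        simp only [Jfun]
        ring
      have hδp : ∀ j : ℕ, ε ≤ b*((j:ℝ)+2) := by
        intro j
        have hj : (0:ℝ) ≤ (j:ℝ) := Nat.cast_nonneg j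
        calc ε ≤ b := hεb
          _ = b * 1 := (mul_one b).symm
          _ ≤ b*((j:ℝ)+2) := by
            apply mul_le_mul_of_nonneg_left (by linarith) (by linarith)
      have hfib : ∀ j : ℕ, ∑ i ∈ Finset.range (j+1), F (i, j - i)
          = (a-b)^2 * φ j (a, b) := by
        intro j
        have hj : (0:ℝ) ≤ (j:ℝ) := Nat.cast_nonneg j
        have hterm : ∀ i ∈ Finset.range (j+1), F (i, j - i) =
            (a-b)^2 * (((j:ℝ)-(i:ℝ)+1)^2 * psiI D ε (b*((j:ℝ)+2)) ((a-b)*((j:ℝ)-(i:ℝ)+1))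
              - (((j:ℝ)+2)^2/2) * psiI D ε (b*((j:ℝ)+2)) ((a-b)*((j:ℝ)+2)))
            + (a-b) * deriv W (b*((j:ℝ)+2)) * (((j:ℝ)-(i:ℝ)+1) - ((j:ℝ)+2)/2) := by
          intro i hi
          have hij : i ≤ j := Nat.lt_succ_iff.mp (Finset.mem_range.mp hi)
          have hi' : (i:ℝ) ≤ (j:ℝ) := by exact_mod_cast hij
          have hi0 : (0:ℝ) ≤ (i:ℝ) := Nat.cast_nonneg i
          have hgm := hgeo (a,b) hqV j ((j:ℝ)-(i:ℝ)+1) (by linarith) (by linarith)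
          have hgn := hgeo (a,b) hqV j ((j:ℝ)+2) (by linarith) le_rfl
          have hδ1 : ε ≤ b*((j:ℝ)+2) + (a-b)*((j:ℝ)-(i:ℝ)+1) := by
            refine le_trans ?_ hgm.2
            nlinarith
          have hδ2 : ε ≤ b*((j:ℝ)+2) + (a-b)*((j:ℝ)+2) := by
            refine le_trans ?_ hgn.2
            nlinarith
          have T1 := aux_taylor2 W hW ε (b*((j:ℝ)+2)) ((a-b)*((j:ℝ)-(i:ℝ)+1)) hε (hδp j) hδ1
          have T2 := aux_taylor2 W hW ε (b*((j:ℝ)+2)) ((a-b)*((j:ℝ)+2)) hε (hδp j) hδ2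
          have c1 : b*((i:ℝ)+1) + a*((((j-i:ℕ)):ℝ)+1)
              = b*((j:ℝ)+2) + (a-b)*((j:ℝ)-(i:ℝ)+1) := by
            rw [Nat.cast_sub hij]; ring
          have c2 : a*((i:ℝ)+(((j-i:ℕ)):ℝ)+2) = b*((j:ℝ)+2) + (a-b)*((j:ℝ)+2) := by
            rw [Nat.cast_sub hij]; ring
          have c3 : b*((i:ℝ)+(((j-i:ℕ)):ℝ)+2) = b*((j:ℝ)+2) := by
            rw [Nat.cast_sub hij]; ring
          show W (b*((i:ℝ)+1)+a*((((j-i:ℕ)):ℝ)+1))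
              - (1/2) * W (a*((i:ℝ)+(((j-i:ℕ)):ℝ)+2)) - (1/2) * W (b*((i:ℝ)+(((j-i:ℕ)):ℝ)+2)) = _
          rw [c1, c2, c3, T1, T2]
          rw [← hDdef]
          ring
        rw [Finset.sum_congr rfl hterm, Finset.sum_add_distrib]
        have hlin : ∑ i ∈ Finset.range (j+1),
            ((a-b) * deriv W (b*((j:ℝ)+2)) * (((j:ℝ)-(i:ℝ)+1) - ((j:ℝ)+2)/2)) = 0 := by
          rw [← Finset.mul_sum, Finset.sum_sub_distrib, hs1 j, Finset.sum_const,
            Finset.card_range, nsmul_eq_mul]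
          push_cast; ring
        rw [hlin, add_zero, ← Finset.mul_sum]
      have hFΦ : ∑' p, F p = (a-b)^2 * Φ (a, b) := by
        rw [aux_tsum_fiber F SF, tsum_congr hfib, tsum_mul_left]
      rw [h2J, hFΦ, mul_div_cancel_left₀ _ (pow_ne_zero 2 hhne)]
  apply (hΦc.continuousAt hV).congr
  filter_upwards [hV] with q hq
  exact (hGΦ q hq).symm
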